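/- Let A, B ≥ 0 and κ, H > 0 be reals satisfying (A - B)² ≤ (H²/4)(A + B)κ. Then A ≥ B - H·sqrt(κB/2) and A ≤ B + H·sqrt(κB/2) + κH²/4. -/
import Mathlib

/-- Key quadratic inequality: if `A, B ≥ 0`, `κ, H > 0` and
`(A - B)² ≤ (H²/4)(A + B)κ`, then
`B - H·√(κB/2) ≤ A ≤ B + H·√(κB/2) + κ·H²/4`. -/
theorem stmt_3 (A B κ H : ℝ) (hA : 0 ≤ A) (hB : 0 ≤ B) (hκ : 0 < κ) (hH : 0 < H)
    (h : (A - B) ^ 2 ≤ (H ^ 2 / 4) * (A + B) * κ) :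
    B - H * Real.sqrt (κ * B / 2) ≤ A ∧
      A ≤ B + H * Real.sqrt (κ * B / 2) + κ * H ^ 2 / 4 := by
  set s := Real.sqrt (κ * B / 2) with hs
  have hs0 : 0 ≤ s := Real.sqrt_nonneg _
  have hssq : s ^ 2 = κ * B / 2 := by
    rw [hs, Real.sq_sqrt]; positivity
  have hC : (0:ℝ) < κ * H ^ 2 / 4 := by positivity
  constructor
  · rcases le_or_gt B A with hle | hlt
    · nlinarith [mul_nonneg hs0 hH.le]
    · -- A < B, then (B-A)^2 ≤ C(A+B) ≤ 2CB = (Hs)^2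
      nlinarith [sq_nonneg (B - A - H * s), mul_nonneg hs0 hH.le, sq_nonneg s]
  · rcases le_or_gt A B with hle | hlt
    · nlinarith [mul_nonneg hs0 hH.le]
    · by_contra hcon
      push_neg at hcon
      have ht : A - B > H * s + κ * H ^ 2 / 4 := by linarith
      nlinarith [mul_pos (by linarith : (0:ℝ) < A - B - H * s - κ * H ^ 2 / 4) (by nlinarith [mul_nonneg hs0 hH.le] : (0:ℝ) < A - B), mul_nonneg hs0 hH.le, mul_nonneg (mul_nonneg hs0 hH.le) hC.le]
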